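/- Let i₁ < i₂ < … < i_h ∈ [m], n = 2^m, and define f = f^↓ ∘ F_{i_h} ∘ … ∘ F_{i_1} on {0,…,n−1}. Then for x < y, f(x) < f(y) if and only if M(x,y) ∈ {i₁,…,i_h}. -/

import Mathlib

private lemma foldl_xor_from (l : List ℕ) (x : ℕ) :
    l.foldl (fun a i => a ^^^ 2 ^ i) x = x ^^^ l.foldl (fun a i => a ^^^ 2 ^ i) 0 := by
  induction l generalizing x with
  | nil => simp
  | cons a t ih =>
    simp only [List.foldl_cons]
    rw [ih (x ^^^ 2 ^ a), ih (0 ^^^ 2 ^ a)]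
    simp [Nat.xor_assoc]

private lemma S_lt (m : ℕ) (l : List ℕ) (hl : ∀ i ∈ l, i < m) :
    l.foldl (fun a i => a ^^^ 2 ^ i) 0 < 2 ^ m := by
  induction l with
  | nil => simp only [List.foldl_nil]; positivity
  | cons a t ih =>
    simp only [List.foldl_cons]
    rw [foldl_xor_from]
    refine Nat.xor_lt_two_pow ?_ (ih fun i hi => hl i (List.mem_cons_of_mem _ hi))
    simpa using Nat.xor_lt_two_pow (Nat.pow_lt_pow_right one_lt_two (hl a List.mem_cons_self))
      (Nat.pow_pos (n := m) (by norm_num))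

private lemma S_testBit (ι : ℕ → ℕ) (h : ℕ)
    (hinj : ∀ a b, a < h → b < h → ι a = ι b → a = b) (k : ℕ) :
    (((List.range h).map ι).foldl (fun a i => a ^^^ 2 ^ i) 0).testBit k
      = decide (∃ j < h, ι j = k) := by
  induction h with
  | zero => simp
  | succ n ih =>
    rw [List.range_succ, List.map_append, List.foldl_append]
    simp only [List.map_cons, List.map_nil, List.foldl_cons, List.foldl_nil]
    rw [Nat.testBit_xor, ih (fun a b ha hb => hinj a b (ha.trans (Nat.lt_succ_self n))
      (hb.trans (Nat.lt_succ_self n))), Nat.testBit_two_pow]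
    by_cases h1 : ∃ j < n, ι j = k
    · obtain ⟨j, hj, hjk⟩ := h1
      have hne : ι n ≠ k := by
        intro he
        exact absurd (hinj j n (hj.trans (Nat.lt_succ_self n)) (Nat.lt_succ_self n)
          (hjk.trans he.symm)) (Nat.ne_of_lt hj)
      have h2 : ∃ j < n + 1, ι j = k := ⟨j, hj.trans (Nat.lt_succ_self n), hjk⟩
      have h0 : ∃ j < n, ι j = k := ⟨j, hj, hjk⟩
      simp [hne, h2, h0]; exact ⟨j, hj.le, hjk⟩
    · by_cases h2 : ι n = k
      · have h3 : ∃ j < n + 1, ι j = k := ⟨n, Nat.lt_succ_self n, h2⟩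
        simp [h1, h2, h3]; exact ⟨n, le_rfl, h2⟩
      · have h3 : ¬ ∃ j < n + 1, ι j = k := by
          rintro ⟨j, hj, hjk⟩
          rcases Nat.lt_succ_iff_lt_or_eq.mp hj with hj | rfl
          · exact h1 ⟨j, hj, hjk⟩
          · exact h2 hjk
        simp [h1, h2, h3]; exact fun x hx e => h3 ⟨x, Nat.lt_succ_of_le hx, e⟩

private lemma msb_testBit (d : ℕ) (hd : d ≠ 0) : d.testBit (Nat.log 2 d) = true := by
  have h1 : 2 ^ Nat.log 2 d ≤ d := Nat.pow_log_le_self 2 hd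
  have h2 : d < 2 ^ (Nat.log 2 d + 1) := Nat.lt_pow_succ_log_self (by norm_num) d
  have hq : d / 2 ^ Nat.log 2 d = 1 := by
    have hp : 0 < 2 ^ Nat.log 2 d := Nat.pow_pos (by norm_num)
    have ha : d / 2 ^ Nat.log 2 d < 2 := Nat.div_lt_iff_lt_mul hp |>.mpr (by rw [Nat.pow_succ] at h2; omega)
    have hb : 1 ≤ d / 2 ^ Nat.log 2 d := (Nat.le_div_iff_mul_le hp).mpr (by omega)
    omega
  simp [Nat.testBit_eq_decide_div_mod_eq, hq]

private lemma msb_high (d j : ℕ) (hj : Nat.log 2 d < j) : d.testBit j = false := by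
  rcases eq_or_ne d 0 with rfl | hd
  · simp
  · refine Nat.testBit_eq_false_of_lt ?_
    calc d < 2 ^ (Nat.log 2 d + 1) := Nat.lt_pow_succ_log_self (by norm_num) d
    _ ≤ 2 ^ j := Nat.pow_le_pow_right (by norm_num) hj

private lemma lt_iff_msb (a b : ℕ) (hne : a ≠ b) :
    a < b ↔ b.testBit (Nat.log 2 (a ^^^ b)) = true := by
  set d := a ^^^ b with hd
  have hd0 : d ≠ 0 := by simp [hd, Nat.xor_eq_zero_iff]; exact hne
  set k := Nat.log 2 d with hk
  have htk : d.testBit k = true := msb_testBit d hd0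
  have hdiff : a.testBit k ≠ b.testBit k := by
    intro he
    rw [hd, Nat.testBit_xor, he, Bool.xor_self] at htk
    exact Bool.false_ne_true htk
  have heq : ∀ j, k < j → a.testBit j = b.testBit j := by
    intro j hj
    have := msb_high d j hj
    rw [hd, Nat.testBit_xor] at this
    rcases Bool.eq_false_or_eq_true (a.testBit j) with h1 | h1 <;>
      rcases Bool.eq_false_or_eq_true (b.testBit j) with h2 | h2 <;>
      simp [h1, h2] at this ⊢
  constructor
  · intro hab
    rcases Bool.eq_false_or_eq_true (b.testBit k) with h1 | h1
    · exact h1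
    · have h2 : a.testBit k = true := by
        rcases Bool.eq_false_or_eq_true (a.testBit k) with h3 | h3
        · exact h3
        · exact absurd (h3.trans h1.symm) hdiff
      have : b < a := Nat.lt_of_testBit k h1 h2 fun j hj => (heq j hj).symm
      omega
  · intro h1
    have h2 : a.testBit k = false := by
      rcases Bool.eq_false_or_eq_true (a.testBit k) with h3 | h3
      · exact absurd (h3.trans h1.symm) hdiff
      · exact h3
    exact Nat.lt_of_testBit k h2 h1 heq

/-- For `f = f^↓ ∘ F_{i_h} ∘ … ∘ F_{i_1}` with `i_1 < … < i_h < m`, and `x < y < 2^m`,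
`f x < f y` iff the most significant differing bit of `x,y` lies in `{i_1, …, i_h}`. -/
theorem stmt8 (m h : ℕ) (ι : ℕ → ℕ)
    (hmono : ∀ a b, a < b → b < h → ι a < ι b)
    (hlt : ∀ j < h, ι j < m)
    (x y : ℕ) (hx : x < 2 ^ m) (hy : y < 2 ^ m) (hxy : x < y) :
    (2 ^ m - 1 - ((List.range h).map ι).foldl (fun a i => a ^^^ 2 ^ i) x
      < 2 ^ m - 1 - ((List.range h).map ι).foldl (fun a i => a ^^^ 2 ^ i) y)
    ↔ ∃ j < h, Nat.log 2 (x ^^^ y) = ι j := by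
  set S := ((List.range h).map ι).foldl (fun a i => a ^^^ 2 ^ i) 0 with hS
  have hinj : ∀ a b, a < h → b < h → ι a = ι b → a = b := by
    intro a b ha hb he
    rcases Nat.lt_trichotomy a b with hl | hl | hl
    · exact absurd he (Nat.ne_of_lt (hmono a b hl hb))
    · exact hl
    · exact absurd he.symm (Nat.ne_of_lt (hmono b a hl ha))
  have hSm : S < 2 ^ m := S_lt m _ (by
    intro i hi
    simp only [List.mem_map, List.mem_range] at hi
    obtain ⟨j, hj, rfl⟩ := hi
    exact hlt j hj)
  rw [foldl_xor_from _ x, foldl_xor_from _ y, ← hS]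
  have hFx : x ^^^ S < 2 ^ m := Nat.xor_lt_two_pow hx hSm
  have hFy : y ^^^ S < 2 ^ m := Nat.xor_lt_two_pow hy hSm
  have hstep : (2 ^ m - 1 - (x ^^^ S) < 2 ^ m - 1 - (y ^^^ S)) ↔ (y ^^^ S < x ^^^ S) := by
    omega
  rw [hstep]
  have hne : x ≠ y := Nat.ne_of_lt hxy
  have hneF : (y ^^^ S) ≠ (x ^^^ S) := fun he =>
    hne (Nat.xor_left_injective he).symm
  set k := Nat.log 2 (x ^^^ y) with hk
  have hdk : ((y ^^^ S) ^^^ (x ^^^ S)) = x ^^^ y := by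
    rw [Nat.xor_comm x S, ← Nat.xor_assoc, Nat.xor_assoc y S S, Nat.xor_self, Nat.xor_zero,
      Nat.xor_comm y x]
  rw [lt_iff_msb _ _ hneF, hdk, ← hk]
  have hxk : x.testBit k = false := by
    have h1 : y.testBit k = true := (lt_iff_msb x y hne).mp hxy
    have h2 : (x ^^^ y).testBit k = true :=
      msb_testBit _ (fun he => hne (Nat.xor_eq_zero_iff.mp he))
    rw [Nat.testBit_xor, h1] at h2
    simpa using h2
  rw [Nat.testBit_xor, hxk, Bool.false_xor, S_testBit ι h hinj k]
  simp only [decide_eq_true_eq]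
  constructor
  · rintro ⟨j, hj, hjk⟩; exact ⟨j, hj, hjk.symm⟩
  · rintro ⟨j, hj, hjk⟩; exact ⟨j, hj, hjk.symm⟩
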